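/- Let Q be a finite quiver without oriented cycles, and let F be a proper nonempty filter in Q. Write Q' and Q'' for the full subquivers on vertex sets F and Q_0 \ F respectively. If x ∈ ℤ^{Q_0} satisfies Σ_{i ∈ Q_0} x_i = 0, Σ_{i ∈ G} x_i ≥ 0 for every filter G, and Σ_{i ∈ F} x_i = 0, then the restriction x' of x to F lies in X_{Q'} and the restriction x'' of x to Q_0 \ F lies in X_{Q''}. -/

import Mathlib

/-- if `x ∈ X_Q` and a proper nonempty filter `F` satisfies `x_F = 0`, then the
restrictions of `x` to `F` and its complement lie in `X_{Q'}` and `X_{Q''}` respectively, where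
`Q'`, `Q''` are the full subquivers on `F` and `Q_0 \ F`. -/
theorem restriction_mem_XQ {V A : Type} [Fintype V] [DecidableEq V] (s t : A → V)
    (hacyc : ∀ v : V, ¬ Relation.TransGen (fun u w : V => ∃ a : A, s a = u ∧ t a = w) v v)
    (F : Finset V) (hFfil : ∀ a : A, s a ∈ F → t a ∈ F)
    (hFne : F.Nonempty) (hFproper : F ≠ Finset.univ)
    (x : V → ℤ)
    (hsum : ∑ i, x i = 0)
    (hfil : ∀ G : Finset V, (∀ a : A, s a ∈ G → t a ∈ G) → 0 ≤ ∑ i ∈ G, x i)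
    (hF0 : ∑ i ∈ F, x i = 0) :
    ((∑ i : {i : V // i ∈ F}, x i.1 = 0) ∧
      ∀ G : Finset {i : V // i ∈ F},
        (∀ (a : A) (h1 : s a ∈ F) (h2 : t a ∈ F), (⟨s a, h1⟩ : {i : V // i ∈ F}) ∈ G →
          (⟨t a, h2⟩ : {i : V // i ∈ F}) ∈ G) →
        0 ≤ ∑ i ∈ G, x i.1) ∧
    ((∑ i : {i : V // i ∉ F}, x i.1 = 0) ∧
      ∀ G : Finset {i : V // i ∉ F},
        (∀ (a : A) (h1 : s a ∉ F) (h2 : t a ∉ F), (⟨s a, h1⟩ : {i : V // i ∉ F}) ∈ G →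
          (⟨t a, h2⟩ : {i : V // i ∉ F}) ∈ G) →
        0 ≤ ∑ i ∈ G, x i.1) := by
  have hcompl : ∑ i ∈ Fᶜ, x i = 0 := by
    have := Finset.sum_add_sum_compl F x
    omega
  refine ⟨⟨?_, ?_⟩, ?_, ?_⟩
  · rw [Finset.sum_coe_sort F x]; exact hF0
  · intro G hG
    have key : 0 ≤ ∑ i ∈ G.image Subtype.val, x i := by
      apply hfil
      intro a ha
      simp only [Finset.mem_image] at ha ⊢
      obtain ⟨⟨v, hv⟩, hvG, hveq⟩ := ha
      have hs : s a ∈ F := hveq ▸ hv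
      have ht : t a ∈ F := hFfil a hs
      refine ⟨⟨t a, ht⟩, hG a hs ht (by simpa [← hveq] using hvG), rfl⟩
    rwa [Finset.sum_image (by intro a _ b _ h; exact Subtype.ext h)] at key
  · rw [show (∑ i : {i : V // i ∉ F}, x i.1) = ∑ i ∈ Fᶜ, x i from
      (Finset.sum_subtype Fᶜ (by simp) x).symm]
    exact hcompl
  · intro G hG
    have key : 0 ≤ ∑ i ∈ G.image Subtype.val ∪ F, x i := by
      apply hfil
      intro a ha
      rcases Finset.mem_union.1 ha with ha | ha
      · simp only [Finset.mem_image] at ha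
        obtain ⟨⟨v, hv⟩, hvG, hveq⟩ := ha
        have hs : s a ∉ F := hveq ▸ hv
        by_cases ht : t a ∈ F
        · exact Finset.mem_union_right _ ht
        · exact Finset.mem_union_left _ (Finset.mem_image.2
            ⟨⟨t a, ht⟩, hG a hs ht (by simpa [← hveq] using hvG), rfl⟩)
      · exact Finset.mem_union_right _ (hFfil a ha)
    have hdisj : Disjoint (G.image Subtype.val) F := by
      simp only [Finset.disjoint_left, Finset.mem_image]
      rintro v ⟨⟨w, hw⟩, _, rfl⟩
      exact hw
    rw [Finset.sum_union hdisj, hF0, add_zero,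
      Finset.sum_image (by simp [Subtype.ext_iff])] at key
    exact key
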